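/- Let A, B ∈ SL(2,ℝ) with ‖A‖ > 1 and ‖B‖ > 1, and suppose A = R_{ψ_A} · Λ_{‖A‖} · R_{φ_A} and B = R_{ψ_B} · Λ_{‖B‖} · R_{φ_B} for real numbers φ_A, ψ_A, φ_B, ψ_B. Put θ = φ_B + ψ_A and N = (‖A‖²‖B‖² + ‖A‖⁻²‖B‖⁻²)·cos²θ + (‖A‖²‖B‖⁻² + ‖A‖⁻²‖B‖²)·sin²θ. Then (1/4)·N ≤ ‖BA‖² ≤ N. -/

import Mathlib

open Real

/-- Operator norm of a 2×2 real matrix, acting on Euclidean space. -/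
noncomputable def opNorm (A : Matrix (Fin 2) (Fin 2) ℝ) : ℝ :=
  ‖(Matrix.toEuclideanCLM (𝕜 := ℝ) A : EuclideanSpace ℝ (Fin 2) →L[ℝ] EuclideanSpace ℝ (Fin 2))‖

/-- Rotation matrix R_θ. -/
noncomputable def Rmat (θ : ℝ) : Matrix (Fin 2) (Fin 2) ℝ :=
  !![Real.cos θ, -Real.sin θ; Real.sin θ, Real.cos θ]

/-- Diagonal matrix Λ_λ = diag(λ, λ⁻¹). -/
noncomputable def Lmat (lam : ℝ) : Matrix (Fin 2) (Fin 2) ℝ := !![lam, 0; 0, lam⁻¹]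

lemma apply_eq (M : Matrix (Fin 2) (Fin 2) ℝ) (x : EuclideanSpace ℝ (Fin 2)) (i : Fin 2) :
    Matrix.toEuclideanCLM (𝕜 := ℝ) M x i = M i 0 * x 0 + M i 1 * x 1 := by
  have h2 : (Matrix.toEuclideanCLM (𝕜 := ℝ) M x) i = (Matrix.toLin' M) (WithLp.equiv _ _ x) i := by
    rfl
  rw [h2]
  simp [Matrix.toLin'_apply, Matrix.mulVec, dotProduct, Fin.sum_univ_two]

lemma norm_sq_apply (M : Matrix (Fin 2) (Fin 2) ℝ) (x : EuclideanSpace ℝ (Fin 2)) :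
    ‖Matrix.toEuclideanCLM (𝕜 := ℝ) M x‖ ^ 2
      = (M 0 0 * x 0 + M 0 1 * x 1) ^ 2 + (M 1 0 * x 0 + M 1 1 * x 1) ^ 2 := by
  rw [EuclideanSpace.norm_eq]
  rw [Real.sq_sqrt (by positivity)]
  simp [Fin.sum_univ_two, apply_eq, sq_abs]

lemma norm_sq_vec (x : EuclideanSpace ℝ (Fin 2)) : ‖x‖ ^ 2 = x 0 ^ 2 + x 1 ^ 2 := by
  rw [EuclideanSpace.norm_eq, Real.sq_sqrt (by positivity)]
  simp [Fin.sum_univ_two, sq_abs]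


lemma Rmat_mul (α β : ℝ) : Rmat α * Rmat β = Rmat (α + β) := by
  ext i j
  fin_cases i <;> fin_cases j <;>
    simp [Rmat, Matrix.mul_apply, Fin.sum_univ_two, Real.cos_add, Real.sin_add] <;> ring

lemma Rmat_zero : Rmat 0 = 1 := by
  ext i j; fin_cases i <;> fin_cases j <;> simp [Rmat, Matrix.one_apply]

lemma opNorm_one : opNorm (1 : Matrix (Fin 2) (Fin 2) ℝ) = 1 := by
  unfold opNorm; rw [map_one]; exact norm_one

lemma opNorm_mul_le (M N : Matrix (Fin 2) (Fin 2) ℝ) :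
    opNorm (M * N) ≤ opNorm M * opNorm N := by
  unfold opNorm; rw [map_mul]; exact norm_mul_le _ _

lemma opNorm_rot_le (θ : ℝ) : opNorm (Rmat θ) ≤ 1 := by
  apply ContinuousLinearMap.opNorm_le_bound _ zero_le_one
  intro x
  rw [one_mul, ← Real.sqrt_sq (norm_nonneg _), ← Real.sqrt_sq (norm_nonneg x)]
  apply Real.sqrt_le_sqrt
  rw [norm_sq_apply, norm_sq_vec]
  have h : Real.sin θ ^ 2 + Real.cos θ ^ 2 = 1 := Real.sin_sq_add_cos_sq θ
  simp [Rmat]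
  nlinarith [h]

lemma opNorm_rot_mul_rot (α β : ℝ) (M : Matrix (Fin 2) (Fin 2) ℝ) :
    opNorm (Rmat α * M * Rmat β) = opNorm M := by
  have key : ∀ (γ δ : ℝ) (N : Matrix (Fin 2) (Fin 2) ℝ),
      opNorm (Rmat γ * N * Rmat δ) ≤ opNorm N := by
    intro γ δ N
    calc opNorm (Rmat γ * N * Rmat δ) ≤ opNorm (Rmat γ * N) * opNorm (Rmat δ) :=
          opNorm_mul_le _ _
      _ ≤ opNorm (Rmat γ) * opNorm N * opNorm (Rmat δ) := by
          have := opNorm_mul_le (Rmat γ) N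
          have h1 : (0:ℝ) ≤ opNorm (Rmat δ) := norm_nonneg _
          nlinarith [norm_nonneg ((Matrix.toEuclideanCLM (𝕜 := ℝ) (Rmat γ * N) : EuclideanSpace ℝ (Fin 2) →L[ℝ] EuclideanSpace ℝ (Fin 2)))]
      _ ≤ 1 * opNorm N * 1 := by
          have h2 : (0:ℝ) ≤ opNorm N := norm_nonneg _
          gcongr
          · exact norm_nonneg _
          · exact opNorm_rot_le γ
          · exact opNorm_rot_le δ
      _ = opNorm N := by ring
  refine le_antisymm (key _ _ _) ?_
  have hM : M = Rmat (-α) * (Rmat α * M * Rmat β) * Rmat (-β) := by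
    have h1 : Rmat (-α) * Rmat α = 1 := by rw [Rmat_mul]; simp [Rmat_zero]
    have h2 : Rmat β * Rmat (-β) = 1 := by rw [Rmat_mul]; simp [Rmat_zero]
    calc M = (Rmat (-α) * Rmat α) * M * (Rmat β * Rmat (-β)) := by rw [h1, h2]; simp
      _ = Rmat (-α) * (Rmat α * M * Rmat β) * Rmat (-β) := by noncomm_ring
  conv_lhs => rw [hM]
  exact key _ _ _
lemma opNorm_sq_le (M : Matrix (Fin 2) (Fin 2) ℝ) :
    opNorm M ^ 2 ≤ M 0 0 ^ 2 + M 0 1 ^ 2 + M 1 0 ^ 2 + M 1 1 ^ 2 := by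
  set S := M 0 0 ^ 2 + M 0 1 ^ 2 + M 1 0 ^ 2 + M 1 1 ^ 2 with hS
  have hS0 : 0 ≤ S := by positivity
  have h : opNorm M ≤ Real.sqrt S := by
    apply ContinuousLinearMap.opNorm_le_bound _ (Real.sqrt_nonneg S)
    intro x
    have hx : 0 ≤ ‖x‖ := norm_nonneg x
    rw [← Real.sqrt_sq (norm_nonneg _), ← Real.sqrt_sq hx, ← Real.sqrt_mul hS0]
    apply Real.sqrt_le_sqrt
    rw [norm_sq_apply, norm_sq_vec, hS]
    nlinarith [sq_nonneg (M 0 0 * x 1 - M 0 1 * x 0), sq_nonneg (M 1 0 * x 1 - M 1 1 * x 0), sq_nonneg (x 0), sq_nonneg (x 1)]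
  calc opNorm M ^ 2 ≤ Real.sqrt S ^ 2 := by
        apply pow_le_pow_left₀ (norm_nonneg _) h
      _ = S := Real.sq_sqrt hS0

lemma col_le_opNorm_sq (M : Matrix (Fin 2) (Fin 2) ℝ) (j : Fin 2) :
    M 0 j ^ 2 + M 1 j ^ 2 ≤ opNorm M ^ 2 := by
  have h := (Matrix.toEuclideanCLM (𝕜 := ℝ) M).le_opNorm (EuclideanSpace.single j 1)
  have hn : ‖(EuclideanSpace.single j (1:ℝ) : EuclideanSpace ℝ (Fin 2))‖ = 1 := by
    simp [EuclideanSpace.norm_single]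
  rw [hn, mul_one] at h
  have h2 := pow_le_pow_left₀ (norm_nonneg _) h 2
  rw [norm_sq_apply] at h2
  fin_cases j <;> simp [EuclideanSpace.single_apply] at h2 <;> exact h2

theorem norm_of_product_of_hyperbolic
    (A B : Matrix (Fin 2) (Fin 2) ℝ)
    (hA : A.det = 1) (hB : B.det = 1)
    (hAn : 1 < opNorm A) (hBn : 1 < opNorm B)
    (φA ψA φB ψB : ℝ)
    (hAdec : A = Rmat ψA * Lmat (opNorm A) * Rmat φA)
    (hBdec : B = Rmat ψB * Lmat (opNorm B) * Rmat φB) :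
    (1 / 4) * ((opNorm A ^ 2 * opNorm B ^ 2 + (opNorm A)⁻¹ ^ 2 * (opNorm B)⁻¹ ^ 2) *
        Real.cos (φB + ψA) ^ 2 +
      (opNorm A ^ 2 * (opNorm B)⁻¹ ^ 2 + (opNorm A)⁻¹ ^ 2 * opNorm B ^ 2) *
        Real.sin (φB + ψA) ^ 2) ≤ opNorm (B * A) ^ 2 ∧
    opNorm (B * A) ^ 2 ≤
      (opNorm A ^ 2 * opNorm B ^ 2 + (opNorm A)⁻¹ ^ 2 * (opNorm B)⁻¹ ^ 2) *
        Real.cos (φB + ψA) ^ 2 +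
      (opNorm A ^ 2 * (opNorm B)⁻¹ ^ 2 + (opNorm A)⁻¹ ^ 2 * opNorm B ^ 2) *
        Real.sin (φB + ψA) ^ 2 := by
  set a := opNorm A with ha
  set b := opNorm B with hb
  set θ := φB + ψA with hθ
  set M : Matrix (Fin 2) (Fin 2) ℝ :=
    !![b * Real.cos θ * a, -(b * Real.sin θ) * a⁻¹;
       b⁻¹ * Real.sin θ * a, b⁻¹ * Real.cos θ * a⁻¹] with hM
  have hBA : B * A = Rmat ψB * M * Rmat φA := by
    rw [hAdec, hBdec]
    have : Lmat b * (Rmat φB * Rmat ψA) * Lmat a = M := by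
      rw [Rmat_mul]
      ext i j
      fin_cases i <;> fin_cases j <;>
        simp [Lmat, Rmat, hM, Matrix.mul_apply, Fin.sum_univ_two, hθ] <;> ring
    rw [← this]
    noncomm_ring
  have hnorm : opNorm (B * A) = opNorm M := by rw [hBA, opNorm_rot_mul_rot]
  have hMe : M 0 0 = b * Real.cos θ * a ∧ M 0 1 = -(b * Real.sin θ) * a⁻¹ ∧
      M 1 0 = b⁻¹ * Real.sin θ * a ∧ M 1 1 = b⁻¹ * Real.cos θ * a⁻¹ := by
    refine ⟨?_, ?_, ?_, ?_⟩ <;> simp [hM]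
  obtain ⟨e00, e01, e10, e11⟩ := hMe
  have hup := opNorm_sq_le M
  have hc0 := col_le_opNorm_sq M 0
  have hc1 := col_le_opNorm_sq M 1
  simp only [e00, e01, e10, e11] at hup hc0 hc1
  rw [hnorm]
  constructor
  · nlinarith [hc0, hc1, sq_nonneg (Real.cos θ), sq_nonneg (Real.sin θ), sq_nonneg a, sq_nonneg b, sq_nonneg a⁻¹, sq_nonneg b⁻¹, mul_nonneg (mul_nonneg (sq_nonneg a) (sq_nonneg b)) (sq_nonneg (Real.cos θ))]
  · nlinarith [hup]
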